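/- If an orientation of an undirected graph G is acyclic and consistent with a perfect elimination ordering (every edge directed from the earlier vertex to the later vertex in the ordering), then the orientation has no immoralities. -/
import Mathlib

/-- If an orientation of a graph `G` is consistent with a perfect elimination ordering
(every edge directed from the earlier vertex to the later one), then it has no immoralities:
no triple `x, z, y` with `x, y` non-adjacent and `x → z`, `y → z`. -/
theorem stmt14 {V : Type*} (G : SimpleGraph V) (ord : V → ℕ)
    (hinj : Function.Injective ord)
    (hpeo : ∀ v u w : V, G.Adj v u → G.Adj v w → ord u < ord v → ord w < ord v →
      u ≠ w → G.Adj u w)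
    (dir : V → V → Prop)
    (hdir : ∀ u v : V, dir u v → G.Adj u v ∧ ord u < ord v)
    (hcover : ∀ u v : V, G.Adj u v → dir u v ∨ dir v u) :
    ¬ ∃ x y z : V, x ≠ y ∧ ¬ G.Adj x y ∧ dir x z ∧ dir y z := by
  rintro ⟨x, y, z, hxy, hnadj, hxz, hyz⟩
  obtain ⟨hax, hox⟩ := hdir x z hxz
  obtain ⟨hay, hoy⟩ := hdir y z hyz
  exact hnadj (hpeo z x y hax.symm hay.symm hox hoy hxy)
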